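/- arXiv:0801.1483 — 2 statements merged into one kernel-verified Lean document; each statement's English description precedes it below -/
import Mathlib

section
/- Let F^* be the leapfrog transform of a fullerene graph F, and let M^0 be the perfect matching of F^* consisting of the edges dual to the edges of F. Then every fresh face of F^* (a face not contained in any face of F) is M^0-alternating, and the heritable faces of F^* (faces contained in faces of F) are pairwise vertex-disjoint. -/
open SimpleGraph

/-- The set of vertices incident with some edge of a face boundary. -/
def faceVerts (f : Finset (Sym2 V)) : Set V := {v | ∃ e ∈ f, v ∈ e}

/-- `G` has a perfect matching. -/
def HasPM (G : SimpleGraph V) : Prop := ∃ M : G.Subgraph, M.IsPerfectMatching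

/-- Number of odd connected components of `G`. -/
noncomputable def oddComponents (G : SimpleGraph V) : ℕ :=
  Nat.card {c : G.ConnectedComponent // Odd (Nat.card c.supp)}

/-- `G` is cyclically `k`-edge-connected: no set of fewer than `k` edges
separates `G` into two parts each containing a cycle. -/
def CycEdgeConn (G : SimpleGraph V) (k : ℕ) : Prop :=
  ∀ D : Finset (Sym2 V), D.card < k →
    ¬ ∃ A : Set V, (∀ a ∈ A, ∀ b ∉ A, ¬ (G.deleteEdges (↑D : Set (Sym2 V))).Adj a b) ∧
      ¬ (G.induce A).IsAcyclic ∧ ¬ (G.induce Aᶜ).IsAcyclic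

/-- A combinatorial fullerene: a cubic, 3-connected plane graph presented together with
its face boundaries (as edge sets of boundary cycles), every face a pentagon or a
hexagon, each edge on exactly two faces, Euler's formula, and exactly 12 pentagons. -/
structure IsFullerene [Fintype V] [DecidableEq V] (G : SimpleGraph V)
    (faces : Finset (Finset (Sym2 V))) : Prop where
  cubic : ∀ v : V, (G.neighborSet v).ncard = 3
  card_ge : 4 ≤ Fintype.card V
  threeConnected : ∀ s : Set V, s.ncard ≤ 2 → (G.induce sᶜ).Connected
  face_cycle : ∀ f ∈ faces, ∃ (v : V) (c : G.Walk v v), c.IsCycle ∧ c.edges.toFinset = f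
  face_size : ∀ f ∈ faces, f.card = 5 ∨ f.card = 6
  edge_two_faces : ∀ e ∈ G.edgeSet, (faces.filter (fun f => e ∈ f)).card = 2
  euler : Fintype.card V + faces.card = G.edgeSet.ncard + 2
  pentagons : (faces.filter (fun f => f.card = 5)).card = 12
/-- Vertices of the leapfrog transform of a plane fullerene `(G, faces)`:
flags (edge, incident face), i.e. the triangles of the intermediate triangulation. -/
def LVert [DecidableEq V] (faces : Finset (Finset (Sym2 V))) : Type _ :=
  {p : Sym2 V × Finset (Sym2 V) // p.2 ∈ faces ∧ p.1 ∈ p.2}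

/-- The leapfrog transform `F^*`: two flags are adjacent if they share the underlying
edge of `F` (dual edges, forming the matching `M⁰`), or lie on the same face of `F`
with consecutive underlying edges. -/
def LGraph [DecidableEq V] (faces : Finset (Finset (Sym2 V))) :
    SimpleGraph (LVert faces) where
  Adj a b := (a.1.1 = b.1.1 ∧ a.1.2 ≠ b.1.2) ∨
    (a.1.2 = b.1.2 ∧ a.1.1 ≠ b.1.1 ∧ ∃ v : V, v ∈ a.1.1 ∧ v ∈ b.1.1)
  symm := by
    constructor
    rintro a b (⟨h1, h2⟩ | ⟨h1, h2, v, hv1, hv2⟩)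
    · exact Or.inl ⟨h1.symm, h2.symm⟩
    · exact Or.inr ⟨h1.symm, h2.symm, v, hv2, hv1⟩
  loopless := by
    constructor
    rintro a (⟨h1, h2⟩ | ⟨h1, h2, -⟩) <;> simp_all

/-- The perfect matching `M⁰` of the leapfrog graph given by the edges dual to the
edges of `F`. -/
def M0 [DecidableEq V] (faces : Finset (Finset (Sym2 V))) : (LGraph faces).Subgraph where
  verts := Set.univ
  Adj a b := (LGraph faces).Adj a b ∧ a.1.1 = b.1.1
  adj_sub h := h.1
  edge_vert _ := Set.mem_univ _
  symm := ⟨fun a b h => ⟨(LGraph faces).symm.symm _ _ h.1, h.2.symm⟩⟩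

/-- The heritable face of `F^*` lying inside the face `f` of `F` (its edge set). -/
def heritableFace [DecidableEq V] (faces : Finset (Finset (Sym2 V)))
    (f : Finset (Sym2 V)) : Set (Sym2 (LVert faces)) :=
  {E | ∃ a b : LVert faces, E = s(a, b) ∧ (LGraph faces).Adj a b ∧
    a.1.2 = f ∧ b.1.2 = f}

/-- The fresh face of `F^*` surrounding the vertex `v` of `F` (its edge set). -/
def freshFace [DecidableEq V] (faces : Finset (Finset (Sym2 V))) (v : V) :
    Set (Sym2 (LVert faces)) :=
  {E | ∃ a b : LVert faces, E = s(a, b) ∧ (LGraph faces).Adj a b ∧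
    v ∈ a.1.1 ∧ v ∈ b.1.1}

/-- Vertices of a face given by a set of edges. -/
def sFaceVerts {W : Type*} (fc : Set (Sym2 W)) : Set W := {a | ∃ E ∈ fc, a ∈ E}

/-- A face (given by its edge set) is `M`-alternating: each of its vertices is
matched by `M` along an edge of the face. -/
def AltSetFace {W : Type*} {G : SimpleGraph W} (M : G.Subgraph)
    (fc : Set (Sym2 W)) : Prop :=
  ∀ a ∈ sFaceVerts fc, ∃ b, s(a, b) ∈ fc ∧ M.Adj a b
/-- For each flag, there is a unique other face containing its edge. -/
lemma M0_unique_partner {V : Type*} [Fintype V] [DecidableEq V]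
    (G : SimpleGraph V) (faces : Finset (Finset (Sym2 V)))
    (hF : IsFullerene G faces) (a : LVert faces) :
    ∃! b : LVert faces, (M0 faces).Adj a b := by
  obtain ⟨⟨e, f⟩, hf, he⟩ := a
  -- e is an edge of G
  obtain ⟨v, c, hc, hce⟩ := hF.face_cycle f hf
  have heG : e ∈ G.edgeSet := by
    apply c.edges_subset_edgeSet
    rw [← List.mem_toFinset, hce]; exact he
  have h2 := hF.edge_two_faces e heG
  obtain ⟨x, y, hxy, hset⟩ := Finset.card_eq_two.mp h2
  have hfmem : f ∈ faces.filter (fun g => e ∈ g) := by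
    simp [Finset.mem_filter, hf, he]
  -- the other face
  have key : ∃ g, g ≠ f ∧ g ∈ faces ∧ e ∈ g ∧
      ∀ g', g' ∈ faces → e ∈ g' → g' ≠ f → g' = g := by
    rw [hset] at hfmem
    simp only [Finset.mem_insert, Finset.mem_singleton] at hfmem
    rcases hfmem with rfl | rfl
    · have hy : y ∈ faces.filter (fun g => e ∈ g) := by rw [hset]; simp
      simp only [Finset.mem_filter] at hy
      refine ⟨y, hxy.symm, hy.1, hy.2, fun g' h1 h2 h3 => ?_⟩
      have : g' ∈ faces.filter (fun g => e ∈ g) := by simp [Finset.mem_filter, h1, h2]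
      rw [hset] at this
      simp only [Finset.mem_insert, Finset.mem_singleton] at this
      tauto
    · have hx : x ∈ faces.filter (fun g => e ∈ g) := by rw [hset]; simp
      simp only [Finset.mem_filter] at hx
      refine ⟨x, hxy, hx.1, hx.2, fun g' h1 h2 h3 => ?_⟩
      have : g' ∈ faces.filter (fun g => e ∈ g) := by simp [Finset.mem_filter, h1, h2]
      rw [hset] at this
      simp only [Finset.mem_insert, Finset.mem_singleton] at this
      tauto
  obtain ⟨g, hgf, hgfaces, heg, huniq⟩ := key
  refine ⟨⟨(e, g), hgfaces, heg⟩, ⟨Or.inl ⟨rfl, fun h => hgf h.symm⟩, rfl⟩, ?_⟩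
  rintro ⟨⟨e', f'⟩, hf', he'⟩ ⟨hadj, hee⟩
  simp only at hee
  subst hee
  have hff' : f ≠ f' := by
    rcases hadj with ⟨_, h⟩ | ⟨_, h, _⟩
    · exact h
    · exact absurd rfl h
  have := huniq f' hf' he' (Ne.symm hff')
  subst this
  rfl


/-- in the leapfrog transform of a fullerene graph, `M⁰` is a perfect
matching, every fresh face is `M⁰`-alternating, and the heritable faces are pairwise
vertex-disjoint. -/
theorem leapfrog_M0_alternating {V : Type*} [Fintype V] [DecidableEq V]
    (G : SimpleGraph V) (faces : Finset (Finset (Sym2 V)))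
    (hF : IsFullerene G faces) :
    (M0 faces).IsPerfectMatching ∧
    (∀ v : V, AltSetFace (M0 faces) (freshFace faces v)) ∧
    (∀ f ∈ faces, ∀ g ∈ faces, f ≠ g →
      Disjoint (sFaceVerts (heritableFace faces f)) (sFaceVerts (heritableFace faces g))) := by
  refine ⟨⟨fun a _ => M0_unique_partner G faces hF a, fun a => Set.mem_univ a⟩, ?_, ?_⟩
  · -- fresh faces alternating
    intro v a ha
    obtain ⟨E, hE, haE⟩ := ha
    obtain ⟨c, d, rfl, hadj, hc, hd⟩ := hE
    have hva : v ∈ a.1.1 := by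
      rcases Sym2.mem_iff.mp haE with rfl | rfl
      · exact hc
      · exact hd
    obtain ⟨b, hb, -⟩ := M0_unique_partner G faces hF a
    refine ⟨b, ⟨a, b, rfl, hb.1, hva, ?_⟩, hb⟩
    rw [← hb.2]; exact hva
  · -- heritable faces disjoint
    intro f hf g hg hfg
    rw [Set.disjoint_left]
    rintro a ⟨E, hE, haE⟩ ⟨E', hE', haE'⟩
    obtain ⟨c, d, rfl, -, hc, hd⟩ := hE
    obtain ⟨c', d', rfl, -, hc', hd'⟩ := hE'
    have h1 : a.1.2 = f := by
      rcases Sym2.mem_iff.mp haE with rfl | rfl <;> assumption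
    have h2 : a.1.2 = g := by
      rcases Sym2.mem_iff.mp haE' with rfl | rfl <;> assumption
    exact hfg (h1 ▸ h2)
end

section
/- The fullerene graph C_70 is 2-resonant: any two disjoint hexagonal faces of C_70 are simultaneously alternating with respect to some perfect matching. -/
set_option maxRecDepth 100000


open SimpleGraph

/-- The face `f` is `M`-alternating: every vertex of `f` is matched by `M`
along an edge of `f`. -/
def AltFace (G : SimpleGraph V) (M : G.Subgraph) (f : Finset (Sym2 V)) : Prop :=
  ∀ v ∈ faceVerts f, ∃ u, s(v, u) ∈ f ∧ M.Adj v u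

/-- A set of (disjoint hexagonal) faces is a resonant pattern if some perfect matching
of `G` is alternating on all of them. -/
def IsResonantPattern (G : SimpleGraph V) (H : Finset (Finset (Sym2 V))) : Prop :=
  ∃ M : G.Subgraph, M.IsPerfectMatching ∧ ∀ f ∈ H, AltFace G M f

/-- `G` (with face set `faces`) is `k`-resonant. -/
def KResonant [Fintype V] [DecidableEq V] (G : SimpleGraph V)
    (faces : Finset (Finset (Sym2 V))) (k : ℕ) : Prop :=
  ∀ H : Finset (Finset (Sym2 V)), H ⊆ faces → (∀ f ∈ H, f.card = 6) →
    (∀ f ∈ H, ∀ g ∈ H, f ≠ g → Disjoint (faceVerts f) (faceVerts g)) →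
    H.card ≤ k → IsResonantPattern G H
/-- The fullerene graph C70 (D5h), on vertex set `Fin 70`. -/
def C70 : SimpleGraph (Fin 70) :=
  SimpleGraph.fromEdgeSet {s(0, 1), s(0, 4), s(0, 5), s(1, 2), s(1, 6), s(2, 3), s(2, 7), s(3, 4), s(3, 8), s(4, 9), s(5, 10), s(5, 11), s(6, 12), s(6, 13), s(7, 14), s(7, 15), s(8, 16), s(8, 17), s(9, 18), s(9, 19), s(10, 19), s(10, 20), s(11, 12), s(11, 21), s(12, 22), s(13, 14), s(13, 23), s(14, 24), s(15, 16), s(15, 25), s(16, 26), s(17, 18), s(17, 27), s(18, 28), s(19, 29), s(20, 21), s(20, 30), s(21, 31), s(22, 23), s(22, 32), s(23, 33), s(24, 25), s(24, 34), s(25, 35), s(26, 27), s(26, 36), s(27, 37), s(28, 29), s(28, 38), s(29, 39), s(30, 39), s(30, 40), s(31, 32), s(31, 41), s(32, 42), s(33, 34), s(33, 43), s(34, 44), s(35, 36), s(35, 45), s(36, 46), s(37, 38), s(37, 47), s(38, 48), s(39, 49), s(40, 41), s(40, 50), s(41, 51), s(42, 43), s(42, 52), s(43, 53), s(44, 45),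 s(44, 54), s(45, 55), s(46, 47), s(46, 56), s(47, 57), s(48, 49), s(48, 58), s(49, 59), s(50, 59), s(50, 60), s(51, 52), s(51, 60), s(52, 61), s(53, 54), s(53, 61), s(54, 62), s(55, 56), s(55, 62), s(56, 63), s(57, 58), s(57, 63), s(58, 64), s(59, 64), s(60, 65), s(61, 66), s(62, 67), s(63, 68), s(64, 69), s(65, 66), s(65, 69), s(66, 67), s(67, 68), s(68, 69)}

/-- The faces of C70, each given by its boundary edge set. -/
def C70faces : Finset (Finset (Sym2 (Fin 70))) :=
  {{s(0, 1), s(0, 4), s(1, 2), s(2, 3), s(3, 4)},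
   {s(0, 1), s(0, 5), s(1, 6), s(5, 11), s(6, 12), s(11, 12)},
   {s(5, 10), s(5, 11), s(10, 20), s(11, 21), s(20, 21)},
   {s(11, 12), s(11, 21), s(12, 22), s(21, 31), s(22, 32), s(31, 32)},
   {s(20, 21), s(20, 30), s(21, 31), s(30, 40), s(31, 41), s(40, 41)},
   {s(31, 32), s(31, 41), s(32, 42), s(41, 51), s(42, 52), s(51, 52)},
   {s(40, 41), s(40, 50), s(41, 51), s(50, 60), s(51, 60)},
   {s(51, 52), s(51, 60), s(52, 61), s(60, 65), s(61, 66), s(65, 66)},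
   {s(1, 2), s(1, 6), s(2, 7), s(6, 13), s(7, 14), s(13, 14)},
   {s(6, 12), s(6, 13), s(12, 22), s(13, 23), s(22, 23)},
   {s(13, 14), s(13, 23), s(14, 24), s(23, 33), s(24, 34), s(33, 34)},
   {s(22, 23), s(22, 32), s(23, 33), s(32, 42), s(33, 43), s(42, 43)},
   {s(33, 34), s(33, 43), s(34, 44), s(43, 53), s(44, 54), s(53, 54)},
   {s(42, 43), s(42, 52), s(43, 53), s(52, 61), s(53, 61)},
   {s(53, 54), s(53, 61), s(54, 62), s(61, 66), s(62, 67), s(66, 67)},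
   {s(2, 3), s(2, 7), s(3, 8), s(7, 15), s(8, 16), s(15, 16)},
   {s(7, 14), s(7, 15), s(14, 24), s(15, 25), s(24, 25)},
   {s(15, 16), s(15, 25), s(16, 26), s(25, 35), s(26, 36), s(35, 36)},
   {s(24, 25), s(24, 34), s(25, 35), s(34, 44), s(35, 45), s(44, 45)},
   {s(35, 36), s(35, 45), s(36, 46), s(45, 55), s(46, 56), s(55, 56)},
   {s(44, 45), s(44, 54), s(45, 55), s(54, 62), s(55, 62)},
   {s(55, 56), s(55, 62), s(56, 63), s(62, 67), s(63, 68), s(67, 68)},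
   {s(3, 4), s(3, 8), s(4, 9), s(8, 17), s(9, 18), s(17, 18)},
   {s(8, 16), s(8, 17), s(16, 26), s(17, 27), s(26, 27)},
   {s(17, 18), s(17, 27), s(18, 28), s(27, 37), s(28, 38), s(37, 38)},
   {s(26, 27), s(26, 36), s(27, 37), s(36, 46), s(37, 47), s(46, 47)},
   {s(37, 38), s(37, 47), s(38, 48), s(47, 57), s(48, 58), s(57, 58)},
   {s(46, 47), s(46, 56), s(47, 57), s(56, 63), s(57, 63)},
   {s(57, 58), s(57, 63), s(58, 64), s(63, 68), s(64, 69), s(68, 69)},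
   {s(0, 4), s(0, 5), s(4, 9), s(5, 10), s(9, 19), s(10, 19)},
   {s(9, 18), s(9, 19), s(18, 28), s(19, 29), s(28, 29)},
   {s(10, 19), s(10, 20), s(19, 29), s(20, 30), s(29, 39), s(30, 39)},
   {s(28, 29), s(28, 38), s(29, 39), s(38, 48), s(39, 49), s(48, 49)},
   {s(30, 39), s(30, 40), s(39, 49), s(40, 50), s(49, 59), s(50, 59)},
   {s(48, 49), s(48, 58), s(49, 59), s(58, 64), s(59, 64)},
   {s(50, 59), s(50, 60), s(59, 64), s(60, 65), s(64, 69), s(65, 69)},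
   {s(65, 66), s(65, 69), s(66, 67), s(67, 68), s(68, 69)}}



/-- The edge set of C70 as a Finset. -/
def E70 : Finset (Sym2 (Fin 70)) :=
  {s(0, 1), s(0, 4), s(0, 5), s(1, 2), s(1, 6), s(2, 3), s(2, 7), s(3, 4), s(3, 8), s(4, 9), s(5, 10), s(5, 11), s(6, 12), s(6, 13), s(7, 14), s(7, 15), s(8, 16), s(8, 17), s(9, 18), s(9, 19), s(10, 19), s(10, 20), s(11, 12), s(11, 21), s(12, 22), s(13, 14), s(13, 23), s(14, 24), s(15, 16), s(15, 25), s(16, 26), s(17, 18), s(17, 27), s(18, 28), s(19, 29), s(20, 21), s(20, 30), s(21, 31), s(22, 23), s(22, 32), s(23, 33), s(24, 25), s(24, 34), s(25, 35), s(26, 27), s(26, 36), s(27, 37), s(28, 29), s(28, 38), s(29, 39), s(30, 39), s(30, 40), s(31, 32), s(31, 41), s(32, 42), s(33, 34), s(33, 43), s(34, 44), s(35, 36), s(35, 45), s(36, 46), s(37, 38), s(37, 47), s(38, 48), s(39, 49), s(40, 41), s(40, 50), s(41, 51), s(42, 43), s(42, 52), s(43, 53), s(44, 45), s(44, 54), s(45,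 55), s(46, 47), s(46, 56), s(47, 57), s(48, 49), s(48, 58), s(49, 59), s(50, 59), s(50, 60), s(51, 52), s(51, 60), s(52, 61), s(53, 54), s(53, 61), s(54, 62), s(55, 56), s(55, 62), s(56, 63), s(57, 58), s(57, 63), s(58, 64), s(59, 64), s(60, 65), s(61, 66), s(62, 67), s(63, 68), s(64, 69), s(65, 66), s(65, 69), s(66, 67), s(67, 68), s(68, 69)}

set_option maxHeartbeats 2000000 in
lemma C70_adj (a b : Fin 70) : C70.Adj a b ↔ s(a, b) ∈ E70 ∧ a ≠ b := by
  rw [C70, SimpleGraph.fromEdgeSet_adj, E70]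
  simp only [Set.mem_insert_iff, Set.mem_singleton_iff, Finset.mem_insert,
    Finset.mem_singleton]

/-- The edges of C70 as numeric codes `a*70+b` (`a<b`). -/
def E70codes : List ℕ := [1, 4, 5, 72, 76, 143, 147, 214, 218, 289, 360, 361, 432, 433, 504, 505, 576, 577, 648, 649, 719, 720, 782, 791, 862, 924, 933, 1004, 1066, 1075, 1146, 1208, 1217, 1288, 1359, 1421, 1430, 1501, 1563, 1572, 1643, 1705, 1714, 1785, 1847, 1856, 1927, 1989, 1998, 2069, 2139, 2140, 2202, 2211, 2282, 2344, 2353, 2424, 2486, 2495, 2566, 2628, 2637, 2708, 2779, 2841, 2850, 2921, 2983, 2992, 3063, 3125, 3134, 3205, 3267, 3276, 3347, 3409, 3418, 3489, 3559, 3560, 3622, 3630, 3701, 3764, 3771, 3842, 3906, 3912, 3983, 4048, 4053, 4124, 4194, 4265, 4336, 4407, 4478, 4549, 4616, 4619, 4687, 4758, 4829]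

/-- The 25 hexagonal faces of C70 as lists of edge codes. -/
def hexN : List (List ℕ) := [[1, 5, 76, 361, 432, 782],
  [782, 791, 862, 1501, 1572, 2202],
  [1421, 1430, 1501, 2140, 2211, 2841],
  [2202, 2211, 2282, 2921, 2992, 3622],
  [3622, 3630, 3701, 4265, 4336, 4616],
  [72, 76, 147, 433, 504, 924],
  [924, 933, 1004, 1643, 1714, 2344],
  [1563, 1572, 1643, 2282, 2353, 2983],
  [2344, 2353, 2424, 3063, 3134, 3764],
  [3764, 3771, 3842, 4336, 4407, 4687],
  [143, 147, 218, 505, 576, 1066],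
  [1066, 1075, 1146, 1785, 1856, 2486],
  [1705, 1714, 1785, 2424, 2495, 3125],
  [2486, 2495, 2566, 3205, 3276, 3906],
  [3906, 3912, 3983, 4407, 4478, 4758],
  [214, 218, 289, 577, 648, 1208],
  [1208, 1217, 1288, 1927, 1998, 2628],
  [1847, 1856, 1927, 2566, 2637, 3267],
  [2628, 2637, 2708, 3347, 3418, 4048],
  [4048, 4053, 4124, 4478, 4549, 4829],
  [4, 5, 289, 360, 649, 719],
  [719, 720, 1359, 1430, 2069, 2139],
  [1989, 1998, 2069, 2708, 2779, 3409],
  [2139, 2140, 2779, 2850, 3489, 3559],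
  [3559, 3560, 4194, 4265, 4549, 4619]]

/-- 23 perfect matchings of C70 as partner lists. -/
def msN : List (List ℕ) := [[5, 2, 1, 8, 9, 0, 13, 14, 3, 4, 19, 12, 11, 6, 7, 16, 15, 18, 17, 10, 21, 20, 23, 22, 25, 24, 27, 26, 29, 28, 40, 41, 42, 43, 44, 45, 46, 47, 48, 49, 30, 31, 32, 33, 34, 35, 36, 37, 38, 39, 59, 52, 51, 61, 62, 56, 55, 58, 57, 50, 65, 53, 54, 68, 69, 60, 67, 66, 63, 64],
  [4, 6, 3, 2, 0, 10, 1, 15, 16, 19, 5, 21, 22, 14, 13, 7, 8, 18, 17, 9, 30, 11, 12, 33, 34, 35, 27, 26, 29, 28, 20, 32, 31, 23, 24, 25, 46, 38, 37, 49, 41, 40, 43, 42, 45, 44, 36, 57, 58, 39, 59, 52, 51, 54, 53, 56, 55, 47, 48, 50, 65, 66, 67, 68, 69, 60, 61, 62, 63, 64],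
  [1, 0, 7, 8, 9, 11, 12, 2, 3, 4, 19, 5, 6, 23, 24, 16, 15, 18, 17, 10, 30, 31, 32, 13, 14, 35, 27, 26, 38, 39, 20, 21, 22, 34, 33, 25, 46, 47, 28, 29, 41, 40, 43, 42, 45, 44, 36, 37, 49, 48, 59, 52, 51, 61, 62, 56, 55, 58, 57, 50, 65, 53, 54, 68, 69, 60, 67, 66, 63, 64],
  [5, 2, 1, 8, 9, 0, 12, 15, 3, 4, 19, 21, 6, 14, 13, 7, 26, 18, 17, 10, 30, 11, 23, 22, 25, 24, 16, 37, 38, 39, 20, 41, 42, 34, 33, 45, 46, 27, 28, 29, 50, 31, 32, 53, 54, 35, 36, 57, 58, 59, 40, 52, 51, 43, 44, 56, 55, 47, 48, 49, 65, 66, 67, 68, 69, 60, 61, 62, 63, 64],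
  [1, 0, 7, 8, 9, 10, 13, 2, 3, 4, 5, 12, 11, 6, 24, 16, 15, 18, 17, 29, 21, 20, 32, 33, 14, 35, 36, 37, 38, 19, 40, 41, 22, 23, 44, 25, 26, 27, 28, 49, 30, 31, 43, 42, 34, 55, 56, 57, 58, 39, 59, 52, 51, 61, 62, 45, 46, 47, 48, 50, 65, 53, 54, 68, 69, 60, 67, 66, 63, 64],
  [5, 2, 1, 8, 9, 0, 13, 14, 3, 4, 19, 12, 11, 6, 7, 16, 15, 18, 17, 10, 21, 20, 23, 22, 25, 24, 27, 26, 29, 28, 40, 41, 42, 43, 44, 45, 46, 38, 37, 49, 30, 31, 32, 33, 34, 35, 36, 57, 58, 39, 59, 52, 51, 54, 53, 62, 63, 47, 48, 50, 65, 66, 55, 56, 69, 60, 61, 68, 67, 64],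
  [5, 2, 1, 8, 9, 0, 13, 14, 3, 4, 19, 12, 11, 6, 7, 16, 15, 18, 17, 10, 30, 31, 32, 33, 25, 24, 36, 37, 38, 39, 20, 21, 22, 23, 44, 45, 26, 27, 28, 29, 41, 40, 43, 42, 34, 35, 56, 57, 49, 48, 59, 60, 61, 54, 53, 62, 46, 47, 64, 50, 51, 52, 55, 68, 58, 69, 67, 66, 63, 65],
  [4, 6, 7, 8, 0, 11, 1, 2, 3, 18, 19, 5, 22, 14, 13, 16, 15, 27, 9, 10, 30, 31, 12, 33, 34, 35, 36, 17, 38, 39, 20, 21, 42, 23, 24, 25, 26, 47, 28, 29, 41, 40, 32, 53, 54, 55, 56, 37, 49, 48, 59, 52, 51, 43, 44, 45, 46, 58, 57, 50, 65, 66, 67, 68, 69, 60, 61, 62, 63, 64],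
  [5, 6, 3, 2, 9, 0, 1, 15, 16, 4, 19, 12, 11, 14, 13, 7, 8, 18, 17, 10, 21, 20, 23, 22, 25, 24, 27, 26, 29, 28, 40, 41, 42, 43, 44, 36, 35, 38, 37, 49, 30, 31, 32, 33, 34, 55, 56, 57, 58, 39, 59, 52, 51, 61, 62, 45, 46, 47, 48, 50, 65, 53, 54, 68, 69, 60, 67, 66, 63, 64],
  [5, 6, 3, 2, 9, 0, 1, 14, 17, 4, 19, 12, 11, 23, 7, 16, 15, 8, 28, 10, 30, 31, 32, 13, 34, 35, 36, 37, 18, 39, 20, 21, 22, 43, 24, 25, 26, 27, 48, 29, 50, 51, 52, 33, 45, 44, 47, 46, 38, 59, 40, 41, 42, 61, 62, 56, 55, 58, 57, 49, 65, 53, 54, 68, 69, 60, 67, 66, 63, 64],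
  [1, 0, 3, 2, 9, 11, 12, 14, 16, 4, 19, 5, 6, 23, 7, 25, 8, 18, 17, 10, 21, 20, 32, 13, 34, 15, 36, 37, 38, 39, 40, 41, 22, 43, 24, 45, 26, 27, 28, 29, 30, 31, 52, 33, 54, 35, 47, 46, 49, 48, 59, 60, 42, 61, 44, 56, 55, 58, 57, 50, 51, 53, 67, 68, 69, 66, 65, 62, 63, 64],
  [4, 6, 3, 2, 0, 10, 1, 14, 17, 19, 5, 21, 22, 23, 7, 16, 15, 8, 28, 9, 30, 11, 12, 13, 25, 24, 27, 26, 18, 39, 20, 32, 31, 43, 44, 36, 35, 47, 48, 29, 50, 51, 52, 33, 34, 55, 56, 37, 38, 59, 40, 41, 42, 54, 53, 45, 46, 58, 57, 49, 65, 66, 67, 68, 69, 60, 61, 62, 63, 64],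
  [1, 0, 7, 8, 9, 10, 12, 2, 3, 4, 5, 21, 6, 23, 24, 16, 15, 18, 17, 29, 30, 11, 32, 13, 14, 35, 36, 37, 38, 19, 20, 41, 22, 34, 33, 25, 26, 27, 28, 49, 50, 31, 52, 53, 54, 55, 56, 57, 58, 39, 40, 60, 42, 43, 44, 45, 46, 47, 48, 64, 51, 66, 67, 68, 59, 69, 61, 62, 63, 65],
  [1, 0, 7, 8, 9, 10, 13, 2, 3, 4, 5, 12, 11, 6, 24, 16, 15, 18, 17, 29, 21, 20, 23, 22, 14, 35, 36, 37, 38, 19, 39, 32, 31, 34, 33, 25, 26, 27, 28, 30, 41, 40, 43, 42, 45, 44, 47, 46, 49, 48, 59, 52, 51, 54, 53, 56, 55, 58, 57, 50, 65, 66, 67, 68, 69, 60, 61, 62, 63, 64],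
  [5, 2, 1, 8, 9, 0, 12, 14, 3, 4, 19, 21, 6, 23, 7, 16, 15, 18, 17, 10, 30, 11, 32, 13, 25, 24, 27, 26, 38, 39, 20, 41, 22, 34, 33, 45, 46, 47, 28, 29, 50, 31, 52, 53, 54, 35, 36, 37, 49, 48, 40, 60, 42, 43, 44, 62, 63, 58, 57, 64, 51, 66, 55, 56, 59, 69, 61, 68, 67, 65],
  [4, 6, 7, 8, 0, 10, 1, 2, 3, 18, 5, 21, 22, 14, 13, 16, 15, 27, 9, 29, 30, 11, 12, 33, 34, 35, 36, 17, 38, 19, 20, 32, 31, 23, 24, 25, 26, 47, 28, 49, 50, 51, 52, 53, 54, 55, 56, 37, 58, 39, 40, 41, 42, 43, 44, 45, 46, 63, 48, 64, 65, 66, 67, 57, 59, 60, 61, 62, 69, 68],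
  [5, 6, 3, 2, 9, 0, 1, 14, 17, 4, 19, 12, 11, 23, 7, 16, 15, 8, 28, 10, 21, 20, 32, 13, 25, 24, 27, 26, 18, 39, 40, 41, 22, 34, 33, 36, 35, 38, 37, 29, 30, 31, 43, 42, 45, 44, 47, 46, 49, 48, 59, 60, 61, 54, 53, 56, 55, 58, 57, 50, 51, 52, 67, 68, 69, 66, 65, 62, 63, 64],
  [5, 2, 1, 8, 9, 0, 12, 15, 3, 4, 20, 21, 6, 23, 24, 7, 26, 18, 17, 29, 10, 11, 32, 13, 14, 35, 16, 37, 38, 19, 39, 41, 22, 34, 33, 25, 46, 27, 28, 30, 50, 31, 43, 42, 45, 44, 36, 57, 58, 59, 40, 52, 51, 61, 62, 56, 55, 47, 48, 49, 65, 53, 54, 68, 69, 60, 67, 66, 63, 64],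
  [1, 0, 7, 4, 3, 10, 12, 2, 17, 18, 5, 21, 6, 23, 24, 25, 26, 8, 9, 29, 30, 11, 32, 13, 14, 15, 16, 37, 38, 19, 20, 41, 22, 34, 33, 36, 35, 27, 28, 49, 50, 31, 52, 53, 54, 55, 56, 57, 58, 39, 40, 60, 42, 43, 44, 45, 46, 47, 48, 64, 51, 66, 67, 68, 59, 69, 61, 62, 63, 65],
  [4, 2, 1, 8, 0, 10, 12, 14, 3, 19, 5, 21, 6, 23, 7, 16, 15, 27, 28, 9, 30, 11, 32, 13, 34, 35, 36, 17, 18, 39, 20, 41, 22, 43, 24, 25, 26, 47, 48, 29, 50, 31, 52, 33, 54, 55, 56, 37, 38, 59, 40, 60, 42, 61, 44, 45, 46, 58, 57, 49, 51, 53, 67, 68, 69, 66, 65, 62, 63, 64],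
  [1, 0, 3, 2, 9, 11, 12, 14, 16, 4, 20, 5, 6, 23, 7, 25, 8, 27, 28, 29, 10, 31, 32, 13, 34, 15, 36, 17, 18, 19, 39, 21, 22, 43, 24, 45, 26, 38, 37, 30, 50, 51, 52, 33, 54, 35, 56, 57, 58, 59, 40, 41, 42, 61, 44, 62, 46, 47, 48, 49, 65, 53, 55, 68, 69, 60, 67, 66, 63, 64],
  [5, 2, 1, 8, 9, 0, 13, 14, 3, 4, 20, 21, 22, 6, 7, 16, 15, 18, 17, 29, 10, 11, 12, 33, 25, 24, 27, 26, 38, 19, 40, 32, 31, 23, 44, 36, 35, 47, 28, 49, 30, 51, 52, 53, 34, 55, 56, 37, 58, 39, 59, 41, 42, 43, 62, 45, 46, 63, 48, 50, 65, 66, 54, 57, 69, 60, 61, 68, 67, 64],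
  [1, 0, 3, 2, 9, 11, 12, 14, 17, 4, 19, 5, 6, 23, 7, 16, 15, 8, 28, 10, 21, 20, 32, 13, 25, 24, 27, 26, 18, 39, 40, 41, 22, 43, 44, 36, 35, 38, 37, 29, 30, 31, 52, 33, 34, 55, 56, 57, 49, 48, 59, 60, 42, 54, 53, 45, 46, 47, 64, 50, 51, 66, 67, 68, 58, 69, 61, 62, 63, 65]]

def vtx (n : ℕ) : Fin 70 := ⟨n % 70, Nat.mod_lt _ (by norm_num)⟩

def decE (c : ℕ) : Sym2 (Fin 70) := s(vtx (c / 70), vtx c)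

def decodeF (lf : List ℕ) : Finset (Sym2 (Fin 70)) := (lf.map decE).toFinset

def fvN (lf : List ℕ) : List ℕ := lf.flatMap (fun c => [c / 70 % 70, c % 70])

def codeN (a b : ℕ) : ℕ := if a ≤ b then a * 70 + b else b * 70 + a

def pn (m : List ℕ) (v : ℕ) : ℕ := m.getD v 0

def pfin (m : List ℕ) (v : Fin 70) : Fin 70 := vtx (pn m v.val)

def altN (m lf : List ℕ) : Prop := ∀ v ∈ fvN lf, codeN v (pn m v) ∈ lf

def disjN (lf lg : List ℕ) : Prop := ∀ v ∈ fvN lf, v ∉ fvN lg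

def VldN (m : List ℕ) : Prop := ∀ v, v < 70 →
  pn m v < 70 ∧ pn m v ≠ v ∧ pn m (pn m v) = v ∧ codeN v (pn m v) ∈ E70codes

instance (m lf : List ℕ) : Decidable (altN m lf) := by unfold altN; infer_instance
instance (lf lg : List ℕ) : Decidable (disjN lf lg) := by unfold disjN; infer_instance
instance (m : List ℕ) : Decidable (VldN m) := by unfold VldN; infer_instance

lemma vtx_fin (v : Fin 70) : vtx v.val = v := Fin.ext (Nat.mod_eq_of_lt v.isLt)

lemma vtx_lt {n : ℕ} (h : n < 70) : (vtx n : ℕ) = n := Nat.mod_eq_of_lt h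

lemma decE_code {a b : ℕ} (ha : a < 70) (hb : b < 70) :
    decE (codeN a b) = s(vtx a, vtx b) := by
  have key : ∀ x y : ℕ, x < 70 → y < 70 → decE (x * 70 + y) = s(vtx x, vtx y) := by
    intro x y hx hy
    unfold decE
    have h1 : vtx ((x * 70 + y) / 70) = vtx x := by
      apply Fin.ext; show (x * 70 + y) / 70 % 70 = x % 70; omega
    have h2 : vtx (x * 70 + y) = vtx y := by
      apply Fin.ext; show (x * 70 + y) % 70 = y % 70; omega
    rw [h1, h2]
  unfold codeN
  rcases le_or_gt a b with h | h
  · rw [if_pos h]; exact key a b ha hb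
  · rw [if_neg (by omega)]
    rw [key b a hb ha]
    exact Sym2.eq_swap

lemma mem_decodeF {lf : List ℕ} {c : ℕ} (h : c ∈ lf) : decE c ∈ decodeF lf :=
  List.mem_toFinset.mpr (List.mem_map_of_mem h)

lemma faceVerts_to_fvN {lf : List ℕ} {v : Fin 70}
    (hv : v ∈ faceVerts (decodeF lf)) : (v : ℕ) ∈ fvN lf := by
  obtain ⟨e, he, hve⟩ := hv
  rw [decodeF, List.mem_toFinset, List.mem_map] at he
  obtain ⟨c, hc, rfl⟩ := he
  rw [decE, Sym2.mem_iff] at hve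
  rw [fvN, List.mem_flatMap]
  refine ⟨c, hc, ?_⟩
  rcases hve with rfl | rfl
  · simp [vtx]
  · simp [vtx]

lemma fvN_to_faceVerts {lf : List ℕ} {n : ℕ} (hn : n ∈ fvN lf) :
    vtx n ∈ faceVerts (decodeF lf) := by
  rw [fvN, List.mem_flatMap] at hn
  obtain ⟨c, hc, hn⟩ := hn
  refine ⟨decE c, mem_decodeF hc, ?_⟩
  rw [decE, Sym2.mem_iff]
  simp only [List.mem_cons, List.mem_singleton, List.not_mem_nil, or_false] at hn
  rcases hn with rfl | rfl
  · left; apply Fin.ext; show (c / 70 % 70) % 70 = (c / 70) % 70; omega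
  · right; apply Fin.ext; show (c % 70) % 70 = c % 70; omega

set_option maxHeartbeats 1000000 in
lemma adjE : ∀ c ∈ E70codes, decE c ∈ E70 := by decide

/-- The perfect-matching subgraph given by a valid partner list. -/
def PMsubN (m : List ℕ) (h : VldN m) : C70.Subgraph where
  verts := Set.univ
  Adj v u := pfin m v = u
  adj_sub := by
    rintro v u rfl
    obtain ⟨h1, h2, h3, h4⟩ := h v.val v.isLt
    have hm : decE (codeN v.val (pn m v.val)) ∈ E70 := adjE _ h4
    rw [decE_code v.isLt h1, vtx_fin v] at hm
    rw [C70_adj]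
    refine ⟨hm, fun hEq => h2 ?_⟩
    have hval : v.val = (vtx (pn m v.val) : ℕ) := congrArg Fin.val hEq
    rw [vtx_lt h1] at hval
    exact hval.symm
  edge_vert := fun _ => Set.mem_univ _
  symm := by
    constructor
    rintro v u rfl
    obtain ⟨h1, _, h3, _⟩ := h v.val v.isLt
    show pfin m (pfin m v) = v
    have e1 : pfin m v = ⟨pn m v.val, h1⟩ := Fin.ext (Nat.mod_eq_of_lt h1)
    rw [e1]
    apply Fin.ext
    show pn m (pn m v.val) % 70 = v.val
    rw [h3]
    exact Nat.mod_eq_of_lt v.isLt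

lemma PMsubN_pm (m : List ℕ) (h : VldN m) : (PMsubN m h).IsPerfectMatching := by
  refine ⟨fun v _ => ⟨pfin m v, rfl, fun y hy => ?_⟩, fun v => Set.mem_univ v⟩
  have h' : pfin m v = y := hy
  exact h'.symm

lemma altFace_of_altN (m : List ℕ) (h : VldN m) {lf : List ℕ} (ha : altN m lf) :
    AltFace C70 (PMsubN m h) (decodeF lf) := by
  intro v hv
  have hv' := faceVerts_to_fvN hv
  have hc := ha v.val hv'
  refine ⟨pfin m v, ?_, rfl⟩
  have h1 := (h v.val v.isLt).1
  have hm := mem_decodeF hc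
  rw [decE_code v.isLt h1, vtx_fin v] at hm
  exact hm

set_option maxHeartbeats 4000000 in
lemma msN_vld : ∀ m ∈ msN, VldN m := by decide

lemma msN_ne : msN ≠ [] := by decide

set_option maxHeartbeats 4000000 in
lemma cover1N : ∀ lf ∈ hexN, ∃ m ∈ msN, altN m lf := by decide

set_option maxHeartbeats 40000000 in
lemma cover2N : ∀ lf ∈ hexN, ∀ lg ∈ hexN, disjN lf lg →
    ∃ m ∈ msN, altN m lf ∧ altN m lg := by decide

set_option maxHeartbeats 4000000 in
lemma bridge : ∀ f ∈ C70faces, f.card = 6 → ∃ lf ∈ hexN, f = decodeF lf := by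
  intro f hf
  unfold C70faces at hf
  simp only [Finset.mem_insert, Finset.mem_singleton] at hf
  rcases hf with rfl | rfl | rfl | rfl | rfl | rfl | rfl | rfl | rfl | rfl | rfl | rfl | rfl | rfl | rfl | rfl | rfl | rfl | rfl | rfl | rfl | rfl | rfl | rfl | rfl | rfl | rfl | rfl | rfl | rfl | rfl | rfl | rfl | rfl | rfl | rfl | rfl
  · exact fun h6 => absurd h6 (by decide)
  · exact fun _ => ⟨[1, 5, 76, 361, 432, 782], by decide, by decide⟩
  · exact fun h6 => absurd h6 (by decide)
  · exact fun _ => ⟨[782, 791, 862, 1501, 1572, 2202], by decide, by decide⟩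
  · exact fun _ => ⟨[1421, 1430, 1501, 2140, 2211, 2841], by decide, by decide⟩
  · exact fun _ => ⟨[2202, 2211, 2282, 2921, 2992, 3622], by decide, by decide⟩
  · exact fun h6 => absurd h6 (by decide)
  · exact fun _ => ⟨[3622, 3630, 3701, 4265, 4336, 4616], by decide, by decide⟩
  · exact fun _ => ⟨[72, 76, 147, 433, 504, 924], by decide, by decide⟩
  · exact fun h6 => absurd h6 (by decide)
  · exact fun _ => ⟨[924, 933, 1004, 1643, 1714, 2344], by decide, by decide⟩
  · exact fun _ => ⟨[1563, 1572, 1643, 2282, 2353, 2983], by decide, by decide⟩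
  · exact fun _ => ⟨[2344, 2353, 2424, 3063, 3134, 3764], by decide, by decide⟩
  · exact fun h6 => absurd h6 (by decide)
  · exact fun _ => ⟨[3764, 3771, 3842, 4336, 4407, 4687], by decide, by decide⟩
  · exact fun _ => ⟨[143, 147, 218, 505, 576, 1066], by decide, by decide⟩
  · exact fun h6 => absurd h6 (by decide)
  · exact fun _ => ⟨[1066, 1075, 1146, 1785, 1856, 2486], by decide, by decide⟩
  · exact fun _ => ⟨[1705, 1714, 1785, 2424, 2495, 3125], by decide, by decide⟩
  · exact fun _ => ⟨[2486, 2495, 2566, 3205, 3276, 3906], by decide, by decide⟩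
  · exact fun h6 => absurd h6 (by decide)
  · exact fun _ => ⟨[3906, 3912, 3983, 4407, 4478, 4758], by decide, by decide⟩
  · exact fun _ => ⟨[214, 218, 289, 577, 648, 1208], by decide, by decide⟩
  · exact fun h6 => absurd h6 (by decide)
  · exact fun _ => ⟨[1208, 1217, 1288, 1927, 1998, 2628], by decide, by decide⟩
  · exact fun _ => ⟨[1847, 1856, 1927, 2566, 2637, 3267], by decide, by decide⟩
  · exact fun _ => ⟨[2628, 2637, 2708, 3347, 3418, 4048], by decide, by decide⟩
  · exact fun h6 => absurd h6 (by decide)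
  · exact fun _ => ⟨[4048, 4053, 4124, 4478, 4549, 4829], by decide, by decide⟩
  · exact fun _ => ⟨[4, 5, 289, 360, 649, 719], by decide, by decide⟩
  · exact fun h6 => absurd h6 (by decide)
  · exact fun _ => ⟨[719, 720, 1359, 1430, 2069, 2139], by decide, by decide⟩
  · exact fun _ => ⟨[1989, 1998, 2069, 2708, 2779, 3409], by decide, by decide⟩
  · exact fun _ => ⟨[2139, 2140, 2779, 2850, 3489, 3559], by decide, by decide⟩
  · exact fun h6 => absurd h6 (by decide)
  · exact fun _ => ⟨[3559, 3560, 4194, 4265, 4549, 4619], by decide, by decide⟩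
  · exact fun h6 => absurd h6 (by decide)

/-- C70 is 2-resonant: any two disjoint hexagonal faces of C70 are
simultaneously alternating with respect to some perfect matching. -/
theorem C70_two_resonant : KResonant C70 C70faces 2 := by
  intro H hsub hhex hdisj hcard
  obtain h0 | h1 | h2 : H.card = 0 ∨ H.card = 1 ∨ H.card = 2 := by omega
  · obtain rfl := Finset.card_eq_zero.mp h0
    exact ⟨PMsubN (msN.head msN_ne) (msN_vld _ (List.head_mem msN_ne)),
      PMsubN_pm _ _, by simp⟩
  · obtain ⟨f, rfl⟩ := Finset.card_eq_one.mp h1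
    have hf : f ∈ C70faces := hsub (Finset.mem_singleton_self f)
    obtain ⟨lf, hlf, rfl⟩ := bridge f hf (hhex f (Finset.mem_singleton_self f))
    obtain ⟨m, hm, ha⟩ := cover1N lf hlf
    refine ⟨PMsubN m (msN_vld _ hm), PMsubN_pm _ _, ?_⟩
    intro g hg
    rw [Finset.mem_singleton] at hg
    subst hg
    exact altFace_of_altN m _ ha
  · obtain ⟨f, g, hfg, rfl⟩ := Finset.card_eq_two.mp h2
    have hfm : f ∈ ({f, g} : Finset (Finset (Sym2 (Fin 70)))) := by simp
    have hgm : g ∈ ({f, g} : Finset (Finset (Sym2 (Fin 70)))) := by simp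
    have hd := hdisj f hfm g hgm hfg
    obtain ⟨lf, hlf, hfe⟩ := bridge f (hsub hfm) (hhex f hfm)
    obtain ⟨lg, hlg, hge⟩ := bridge g (hsub hgm) (hhex g hgm)
    subst hfe; subst hge
    have hdN : disjN lf lg := fun n hn hn' =>
      Set.disjoint_left.mp hd (fvN_to_faceVerts hn) (fvN_to_faceVerts hn')
    obtain ⟨m, hm, ha1, ha2⟩ := cover2N lf hlf lg hlg hdN
    refine ⟨PMsubN m (msN_vld _ hm), PMsubN_pm _ _, ?_⟩
    intro x hx
    rw [Finset.mem_insert, Finset.mem_singleton] at hx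
    rcases hx with rfl | rfl
    · exact altFace_of_altN m _ ha1
    · exact altFace_of_altN m _ ha2
end
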